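/- Let k ≥ 3 be an integer and let V₁, V₂, …, V_k be pairwise disjoint finite sets, each of cardinality at least 3, with union V. For each i ∈ {1,…,k} let Bᵢ be a binary hierarchy on Vᵢ. Set H_C := {V} ∪ B₁ ∪ ⋯ ∪ B_k (the hierarchy of the tree C = ⟨B₁,…,B_k⟩), and for each pair of distinct elements a, b ∈ V set H_{a,b} := {V, {a}, {b}} ∪ ⋃_{i=1}^{k} {A ∖ {a,b} : A ∈ Bᵢ, A ∖ {a,b} ≠ ∅} (the hierarchy of the tree C_{a,b} obtained from C by removing the leaves a and b and re-grafting both as children of the root). Then for every subset L ⊆ V the following two statements are equivalent: (i) |L| = k and the restrictions H_C|L and H_{a,b}|L, over all pairs of distinct a, b ∈ V, are all equal; (ii) |L ∩ Vᵢ| = 1 for every i ∈ {1,…,k}. Moreover, when these hold, the common restriction equals {L} ∪ {{x} : x ∈ L}, the hierarchy of the height-one star tree on L. -/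

import Mathlib

open Set

/-- `F` is a hierarchy on `L`: a family of nonempty subsets of `L` containing `L`
itself and all singletons, and laminar (any two members are disjoint or nested). -/
def IsHierarchy {α : Type*} (L : Set α) (F : Set (Set α)) : Prop :=
  (∀ A ∈ F, A ⊆ L ∧ A.Nonempty) ∧ L ∈ F ∧ (∀ x ∈ L, {x} ∈ F) ∧
    ∀ A ∈ F, ∀ B ∈ F, A ∩ B = ∅ ∨ A ⊆ B ∨ B ⊆ A

/-- The restriction `H|L := {A ∩ L : A ∈ H, A ∩ L ≠ ∅}` of a family of sets `H`
to a set `L`. -/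
def restrictH {α : Type*} (H : Set (Set α)) (L : Set α) : Set (Set α) :=
  {S | ∃ A ∈ H, S = A ∩ L ∧ S.Nonempty}


private lemma finite_exists_maximal_wrt {α β : Type*} [PartialOrder β] (f : α → β) (s : Set α)
    (h : s.Finite) (hs : s.Nonempty) : ∃ a ∈ s, ∀ a' ∈ s, f a ≤ f a' → f a = f a' := by
  obtain ⟨a, ha1, ha2⟩ := Set.Finite.exists_maximalFor f s h hs
  exact ⟨a, ha1, fun a' ha' hle => le_antisymm hle (ha2 ha' hle)⟩

private def MaxW {α : Type*} (F : Set (Set α)) : Set (Set α) :=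
  {A | A ∈ F ∧ ∀ B ∈ F, A ⊆ B → A = B}

private lemma exists_le_maximal {α : Type*} {F : Set (Set α)} (hF : F.Finite)
    {A : Set α} (hA : A ∈ F) : ∃ M ∈ MaxW F, A ⊆ M := by
  obtain ⟨M, hM, hmax⟩ := finite_exists_maximal_wrt id {B ∈ F | A ⊆ B}
    (hF.subset (sep_subset _ _)) ⟨A, hA, subset_rfl⟩
  exact ⟨M, ⟨hM.1, fun B hB hMB => hmax B ⟨hB, hM.2.trans hMB⟩ hMB⟩, hM.2⟩

private lemma count_key {α : Type*} (n : ℕ) :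
    ∀ F : Set (Set α), F.Finite → F.ncard ≤ n →
      (∀ A ∈ F, A.Nonempty ∧ A.Finite) →
      (∀ A ∈ F, ∀ B ∈ F, A ∩ B = ∅ ∨ A ⊆ B ∨ B ⊆ A) →
      F.ncard + (MaxW F).ncard ≤ 2 * (⋃₀ F).ncard := by
  induction n with
  | zero =>
    intro F hF hn hne hlam
    have hF0 : F = ∅ := by
      rw [← Set.ncard_eq_zero hF]; omega
    subst hF0
    simp [MaxW]
  | succ n ih =>
    intro F hF hn hne hlam
    by_cases hc : F.ncard ≤ n
    · exact ih F hF hc hne hlam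
    have hcard : F.ncard = n + 1 := by omega
    have hFne : F.Nonempty := Set.nonempty_of_ncard_ne_zero (by omega)
    obtain ⟨A0, hA0⟩ := hFne
    obtain ⟨M, hMmax, -⟩ := exists_le_maximal hF hA0
    have hM : M ∈ F := hMmax.1
    have hMfin : M.Finite := (hne M hM).2
    have hMne : M.Nonempty := (hne M hM).1
    have hM1 : 1 ≤ M.ncard := (Set.ncard_pos hMfin).2 hMne
    set F₁ : Set (Set α) := {A ∈ F | A ⊆ M} with hF₁def
    set F₂ : Set (Set α) := F \ F₁ with hF₂def
    have hF₁sub : F₁ ⊆ F := sep_subset _ _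
    have hF₁fin : F₁.Finite := hF.subset hF₁sub
    have hF₂fin : F₂.Finite := hF.subset diff_subset
    have hMF₁ : M ∈ F₁ := ⟨hM, subset_rfl⟩
    have hF₂disj : ∀ A ∈ F₂, A ∩ M = ∅ := by
      intro A hA
      rcases hlam A hA.1 M hM with h | h | h
      · exact h
      · exact absurd ⟨hA.1, h⟩ hA.2
      · exact absurd ⟨hA.1, (hMmax.2 A hA.1 h).symm.subset⟩ hA.2
    -- MaxW F = insert M (MaxW F₂)
    have hMaxEq : MaxW F = insert M (MaxW F₂) := by
      ext A
      constructor
      · rintro ⟨hAF, hAmax⟩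
        by_cases hAM : A ⊆ M
        · exact Or.inl (hAmax M hM hAM)
        · refine Or.inr ⟨⟨hAF, fun h => hAM h.2⟩, fun B hB hAB => hAmax B hB.1 hAB⟩
      · rintro (rfl | ⟨hAF₂, hAmax₂⟩)
        · exact hMmax
        · refine ⟨hAF₂.1, fun B hB hAB => ?_⟩
          by_cases hBM : B ⊆ M
          · exact absurd ⟨hAF₂.1, hAB.trans hBM⟩ hAF₂.2
          · exact hAmax₂ B ⟨hB, fun hB₁ => hBM hB₁.2⟩ hAB
    have hMnot₂ : M ∉ MaxW F₂ := fun h => h.1.2 hMF₁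
    have hMaxCard : (MaxW F).ncard = (MaxW F₂).ncard + 1 := by
      rw [hMaxEq, Set.ncard_insert_of_notMem hMnot₂
        ((hF₂fin.subset (fun B hB => hB.1)))]
    -- split cardinality
    have hsplit : F₂.ncard + F₁.ncard = F.ncard :=
      Set.ncard_diff_add_ncard_of_subset hF₁sub hF
    -- IH on F₂
    have hF₂lt : F₂.ncard < F.ncard :=
      Set.ncard_lt_ncard ⟨diff_subset, fun hsub => (hsub hM).2 hMF₁⟩ hF
    have ih₂ := ih F₂ hF₂fin (by omega) (fun A hA => hne A hA.1)
      (fun A hA B hB => hlam A hA.1 B hB.1)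
    -- bound on F₁
    have hF₁bound : F₁.ncard ≤ 2 * M.ncard - 1 := by
      set F₁' : Set (Set α) := F₁ \ {M} with hF₁'def
      have hF₁'fin : F₁'.Finite := hF₁fin.subset diff_subset
      have hF₁'card : F₁'.ncard + 1 = F₁.ncard :=
        Set.ncard_diff_singleton_add_one hMF₁ hF₁fin
      have hF₁'sub : F₁' ⊆ F := fun A hA => hA.1.1
      have hF₁'lt : F₁'.ncard < F.ncard :=
        Set.ncard_lt_ncard ⟨hF₁'sub, fun hsub => (hsub hM).2 rfl⟩ hF
      have ih₁ := ih F₁' hF₁'fin (by omega) (fun A hA => hne A hA.1.1)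
        (fun A hA B hB => hlam A hA.1.1 B hB.1.1)
      rcases eq_empty_or_nonempty F₁' with h0 | h0
      · have h0' : F₁'.ncard = 0 := by rw [h0]; simp
        omega
      · have hUsub : ⋃₀ F₁' ⊆ M := sUnion_subset fun A hA => hA.1.2
        have hUfin : (⋃₀ F₁').Finite := hMfin.subset hUsub
        obtain ⟨A1, hA1⟩ := h0
        obtain ⟨M1, hM1', -⟩ := exists_le_maximal hF₁'fin hA1
        have hMaxfin : (MaxW F₁').Finite := hF₁'fin.subset (fun B hB => hB.1)
        have hMaxpos : 1 ≤ (MaxW F₁').ncard :=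
          (Set.ncard_pos hMaxfin).2 ⟨M1, hM1'⟩
        by_cases h2 : 2 ≤ (MaxW F₁').ncard
        · have := Set.ncard_le_ncard hUsub hMfin
          omega
        · have h1 : (MaxW F₁').ncard = 1 := by omega
          obtain ⟨M', hM'eq⟩ := Set.ncard_eq_one.1 h1
          have hM'mem : M' ∈ MaxW F₁' := by rw [hM'eq]; exact rfl
          have hallsub : ∀ A ∈ F₁', A ⊆ M' := by
            intro A hA
            obtain ⟨N, hN, hAN⟩ := exists_le_maximal hF₁'fin hA
            have : N = M' := by
              have := hM'eq ▸ hN; exact this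
            exact this ▸ hAN
          have hU' : ⋃₀ F₁' ⊆ M' := sUnion_subset hallsub
          have hM'M : M' ⊂ M := by
            refine ⟨hM'mem.1.1.2, fun hMM' => hM'mem.1.2 ?_⟩
            have : M' = M := subset_antisymm hM'mem.1.1.2 hMM'
            exact this ▸ rfl
          have hM'lt : M'.ncard < M.ncard := Set.ncard_lt_ncard hM'M hMfin
          have hUle : (⋃₀ F₁').ncard ≤ M'.ncard :=
            Set.ncard_le_ncard hU' (hMfin.subset hM'M.subset)
          omega
    -- combine
    have hUF₂fin : (⋃₀ F₂).Finite := hF₂fin.sUnion (fun A hA => (hne A hA.1).2)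
    have hdisj : Disjoint M (⋃₀ F₂) := by
      rw [Set.disjoint_sUnion_right]
      intro A hA
      rw [disjoint_comm, disjoint_iff_inter_eq_empty]
      exact hF₂disj A hA
    have hunion : (M ∪ ⋃₀ F₂).ncard = M.ncard + (⋃₀ F₂).ncard :=
      Set.ncard_union_eq hdisj hMfin hUF₂fin
    have hUFfin : (⋃₀ F).Finite := hF.sUnion (fun A hA => (hne A hA).2)
    have hsubU : M ∪ ⋃₀ F₂ ⊆ ⋃₀ F := by
      apply union_subset
      · exact subset_sUnion_of_mem hM
      · exact sUnion_subset_sUnion diff_subset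
    have hle := Set.ncard_le_ncard hsubU hUFfin
    omega

private lemma laminar_ncard_le {α : Type*} {F : Set (Set α)} {U : Set α} (hU : U.Finite)
    (hFU : ∀ A ∈ F, A.Nonempty ∧ A ⊆ U)
    (hlam : ∀ A ∈ F, ∀ B ∈ F, A ∩ B = ∅ ∨ A ⊆ B ∨ B ⊆ A) :
    F.ncard ≤ 2 * U.ncard - 1 := by
  rcases eq_empty_or_nonempty F with rfl | hFne
  · simp
  · have hFfin : F.Finite := hU.finite_subsets.subset (fun A hA => (hFU A hA).2)
    obtain ⟨A0, hA0⟩ := hFne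
    obtain ⟨M, hM, -⟩ := exists_le_maximal hFfin hA0
    have hMaxpos : 1 ≤ (MaxW F).ncard :=
      (Set.ncard_pos (hFfin.subset (fun B hB => hB.1))).2 ⟨M, hM⟩
    have hkey := count_key F.ncard F hFfin le_rfl
      (fun A hA => ⟨(hFU A hA).1, hU.subset (hFU A hA).2⟩) hlam
    have hUsub : ⋃₀ F ⊆ U := sUnion_subset fun A hA => (hFU A hA).2
    have := Set.ncard_le_ncard hUsub hU
    omega

private lemma hierarchy_split {α : Type*} {X : Set α} {H : Set (Set α)} (hX : X.Finite)
    (hH : IsHierarchy X H) (hcard : H.ncard = 2 * X.ncard - 1)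
    {L : Set α} (hLX : L ⊆ X) (hL3 : 3 ≤ L.ncard) :
    ∃ A ∈ H, ∃ p q, p ∈ A ∩ L ∧ q ∈ A ∩ L ∧ p ≠ q ∧ ¬ L ⊆ A := by
  obtain ⟨hsubX, hXH, hsing, hlam⟩ := hH
  by_contra hbad
  push_neg at hbad
  -- hbad : ∀ A ∈ H, ∀ p q, p ∈ A ∩ L → q ∈ A ∩ L → p ≠ q → L ⊆ A
  have hLfin : L.Finite := hX.subset hLX
  have hX3 : 3 ≤ X.ncard := le_trans hL3 (Set.ncard_le_ncard hLX hX)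
  obtain ⟨x, hxL⟩ : L.Nonempty := Set.nonempty_of_ncard_ne_zero (by omega)
  have hd1 : (L \ {x}).ncard + 1 = L.ncard := Set.ncard_diff_singleton_add_one hxL hLfin
  obtain ⟨y, z, hy, hz, hyz⟩ := (Set.one_lt_ncard_iff (s := L \ {x}) (hLfin.diff)).1 (by omega)
  have hyL : y ∈ L := hy.1
  have hzL : z ∈ L := hz.1
  have hyx : y ≠ x := by simpa using hy.2
  have hzx : z ≠ x := by simpa using hz.2
  have hHfin : H.Finite := hX.finite_subsets.subset (fun A hA => (hsubX A hA).1)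
  -- maximal cluster containing x but not containing L
  have getmax : ∀ w ∈ L, ∀ w' ∈ L, w' ≠ w →
      ∃ C ∈ H, w ∈ C ∧ ¬ L ⊆ C ∧ (∀ A ∈ H, w ∈ A → ¬ L ⊆ A → A ⊆ C) ∧
        (C ∩ L = {w}) := by
    intro w hw w' hw' hww
    have hsw : ({w} : Set α) ∈ H := hsing w (hLX hw)
    have hnsub : ¬ L ⊆ ({w} : Set α) := fun h => hww (h hw')
    obtain ⟨C, hC, hCmax⟩ := finite_exists_maximal_wrt id {A ∈ H | w ∈ A ∧ ¬ L ⊆ A}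
      (hHfin.subset (sep_subset _ _)) ⟨{w}, hsw, rfl, hnsub⟩
    have hmax : ∀ A ∈ H, w ∈ A → ¬ L ⊆ A → A ⊆ C := by
      intro A hA hwA hLA
      rcases hlam A hA C hC.1 with h | h | h
      · exact absurd (show w ∈ A ∩ C from ⟨hwA, hC.2.1⟩) (by rw [h]; exact Set.notMem_empty w)
      · exact h
      · exact (hCmax A ⟨hA, hwA, hLA⟩ h).symm.subset
    refine ⟨C, hC.1, hC.2.1, hC.2.2, hmax, ?_⟩
    apply subset_antisymm
    · intro u hu
      by_contra huw
      exact hC.2.2 (hbad C hC.1 u w hu ⟨hC.2.1, hw⟩ (by simpa using huw))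
    · intro u hu
      rw [mem_singleton_iff.1 hu]
      exact ⟨hC.2.1, hw⟩
  obtain ⟨Cx, hCxH, hxCx, hnLCx, hCxmax, hCxL⟩ := getmax x hxL y hyL hyx
  obtain ⟨Cy, hCyH, hyCy, hnLCy, hCymax, hCyL⟩ := getmax y hyL x hxL (fun h => hyx h.symm)
  have hdisjxy : Cx ∩ Cy = ∅ := by
    rcases hlam Cx hCxH Cy hCyH with h | h | h
    · exact h
    · exfalso
      have : x ∈ Cy ∩ L := ⟨h hxCx, hxL⟩
      rw [hCyL] at this
      exact hyx (mem_singleton_iff.1 this).symm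
    · exfalso
      have : y ∈ Cx ∩ L := ⟨h hyCy, hyL⟩
      rw [hCxL] at this
      exact hyx (mem_singleton_iff.1 this)
  set S : Set α := Cx ∪ Cy with hSdef
  have hSnotH : S ∉ H := by
    intro hS
    have hLS : L ⊆ S := hbad S hS x y ⟨Or.inl hxCx, hxL⟩ ⟨Or.inr hyCy, hyL⟩
      (fun h => hyx h.symm)
    rcases hLS hzL with h | h
    · have : z ∈ Cx ∩ L := ⟨h, hzL⟩
      rw [hCxL] at this
      exact hzx (mem_singleton_iff.1 this)
    · have : z ∈ Cy ∩ L := ⟨h, hzL⟩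
      rw [hCyL] at this
      exact hyz (mem_singleton_iff.1 this).symm
  have hlamS : ∀ A ∈ H, A ∩ S = ∅ ∨ A ⊆ S ∨ S ⊆ A := by
    intro A hA
    by_cases hxA : x ∈ A
    · by_cases hLA : L ⊆ A
      · right; right
        have h1 : Cx ⊆ A := by
          rcases hlam Cx hCxH A hA with h | h | h
          · exact absurd (show x ∈ Cx ∩ A from ⟨hxCx, hxA⟩)
              (by rw [h]; exact Set.notMem_empty x)
          · exact h
          · exact absurd (hLA.trans h) hnLCx
        have h2 : Cy ⊆ A := by
          rcases hlam Cy hCyH A hA with h | h | h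
          · exact absurd (show y ∈ Cy ∩ A from ⟨hyCy, hLA hyL⟩)
              (by rw [h]; exact Set.notMem_empty y)
          · exact h
          · exact absurd (hLA.trans h) hnLCy
        exact union_subset h1 h2
      · right; left
        exact (hCxmax A hA hxA hLA).trans subset_union_left
    · by_cases hyA : y ∈ A
      · by_cases hLA : L ⊆ A
        · exact absurd (hLA hxL) hxA
        · right; left
          exact (hCymax A hA hyA hLA).trans subset_union_right
      · have hx' : A ⊆ Cx ∨ A ∩ Cx = ∅ := by
          rcases hlam A hA Cx hCxH with h | h | h
          · exact Or.inr h
          · exact Or.inl h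
          · exact absurd (h hxCx) hxA
        have hy' : A ⊆ Cy ∨ A ∩ Cy = ∅ := by
          rcases hlam A hA Cy hCyH with h | h | h
          · exact Or.inr h
          · exact Or.inl h
          · exact absurd (h hyCy) hyA
        rcases hx' with h | h
        · exact Or.inr (Or.inl (h.trans subset_union_left))
        rcases hy' with h' | h'
        · exact Or.inr (Or.inl (h'.trans subset_union_right))
        · left
          rw [inter_union_distrib_left, h, h', union_empty]
  have hkey := laminar_ncard_le (F := insert S H) hX
    (by
      rintro A (rfl | hA)
      · exact ⟨⟨x, Or.inl hxCx⟩, union_subset (hsubX Cx hCxH).1 (hsubX Cy hCyH).1⟩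
      · exact ⟨(hsubX A hA).2, (hsubX A hA).1⟩)
    (by
      rintro A (rfl | hA) B (rfl | hB)
      · exact Or.inr (Or.inl subset_rfl)
      · rcases hlamS B hB with h | h | h
        · exact Or.inl (by rw [inter_comm]; exact h)
        · exact Or.inr (Or.inr h)
        · exact Or.inr (Or.inl h)
      · exact hlamS A hA
      · exact hlam A hA B hB)
  have hins : (insert S H).ncard = H.ncard + 1 := Set.ncard_insert_of_notMem hSnotH hHfin
  omega

theorem mast_control {α : Type*} (k : ℕ) (hk : 3 ≤ k)
    (Vs : Fin k → Set α)
    (hfin : ∀ i, (Vs i).Finite)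
    (hcard3 : ∀ i, 3 ≤ (Vs i).ncard)
    (hdisj : ∀ i j, i ≠ j → Disjoint (Vs i) (Vs j))
    (Bs : Fin k → Set (Set α))
    -- each `Bᵢ` is a binary hierarchy on `Vᵢ` (binary ⇔ it has `2|Vᵢ| - 1` members)
    (hB : ∀ i, IsHierarchy (Vs i) (Bs i) ∧ (Bs i).ncard = 2 * (Vs i).ncard - 1) :
    -- `V := V₁ ∪ ⋯ ∪ V_k`
    let V : Set α := ⋃ i, Vs i
    -- the hierarchy of the tree `C = ⟨B₁, …, B_k⟩`
    let HC : Set (Set α) := {V} ∪ ⋃ i, Bs i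
    -- the hierarchy of the tree `C_{a,b}`
    let Hab : α → α → Set (Set α) := fun a b =>
      {V, {a}, {b}} ∪ ⋃ i, {S | ∃ A ∈ Bs i, S = A \ {a, b} ∧ S.Nonempty}
    ∀ L : Set α, L ⊆ V →
      (((L.ncard = k ∧
          ∀ a ∈ V, ∀ b ∈ V, a ≠ b → restrictH (Hab a b) L = restrictH HC L) ↔
        (∀ i, (L ∩ Vs i).ncard = 1)) ∧
      ((L.ncard = k ∧
          ∀ a ∈ V, ∀ b ∈ V, a ≠ b → restrictH (Hab a b) L = restrictH HC L) →
        restrictH HC L = {L} ∪ {S | ∃ x ∈ L, S = {x}})) := by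
  intro V HC Hab L hL
  classical
  have hVfin : V.Finite := Set.finite_iUnion hfin
  have hLfin : L.Finite := hVfin.subset hL
  have hViV : ∀ i, Vs i ⊆ V := fun i => Set.subset_iUnion Vs i
  have hBsub : ∀ i, ∀ A ∈ Bs i, A ⊆ Vs i ∧ A.Nonempty := fun i => ((hB i).1).1
  have hVB : ∀ i, Vs i ∈ Bs i := fun i => ((hB i).1).2.1
  have hsing : ∀ i, ∀ w ∈ Vs i, {w} ∈ Bs i := fun i => ((hB i).1).2.2.1
  have hVL : V ∩ L = L := Set.inter_eq_right.mpr hL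
  have hVHC : V ∈ HC := Or.inl rfl
  have hmemB : ∀ i, ∀ A ∈ Bs i, A ∈ HC := fun i A hA => Or.inr (Set.mem_iUnion.2 ⟨i, hA⟩)
  have key1 : (∀ i, (L ∩ Vs i).ncard = 1) →
      L.ncard = k ∧ restrictH HC L = {L} ∪ {S | ∃ x ∈ L, S = {x}} ∧
      (∀ a ∈ V, ∀ b ∈ V, a ≠ b →
        restrictH (Hab a b) L = {L} ∪ {S | ∃ x ∈ L, S = {x}}) := by
    intro h1
    have hx : ∀ i, ∃ w, L ∩ Vs i = {w} := fun i => Set.ncard_eq_one.1 (h1 i)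
    choose x hx using hx
    have hxm : ∀ i, x i ∈ L ∧ x i ∈ Vs i := by
      intro i
      have : x i ∈ L ∩ Vs i := by rw [hx i]; exact rfl
      exact ⟨this.1, this.2⟩
    have hLx : ∀ w ∈ L, ∃ i, w = x i := by
      intro w hw
      obtain ⟨i, hi⟩ := Set.mem_iUnion.1 (hL hw)
      have : w ∈ L ∩ Vs i := ⟨hw, hi⟩
      rw [hx i] at this
      exact ⟨i, this⟩
    have hLne : L.Nonempty := ⟨x ⟨0, by omega⟩, (hxm _).1⟩
    have hkcard : L.ncard = k := by
      have hinj : Function.Injective x := by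
        intro i j hij
        by_contra hne'
        exact (hdisj i j hne').le_bot ⟨(hxm i).2, hij ▸ (hxm j).2⟩
      have hrange : L = Set.range x := by
        ext w
        constructor
        · intro hw; obtain ⟨i, hi⟩ := hLx w hw; exact ⟨i, hi.symm⟩
        · rintro ⟨i, rfl⟩; exact (hxm i).1
      rw [hrange, ← Set.image_univ, Set.ncard_image_of_injective _ hinj,
        Set.ncard_univ, Nat.card_eq_fintype_card, Fintype.card_fin]
    have hsingleton : ∀ (i : Fin k) (A : Set α), A ⊆ Vs i → (A ∩ L).Nonempty →
        A ∩ L = {x i} := by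
      intro i A hAV hne'
      have hsub : A ∩ L ⊆ {x i} := by
        intro w hw
        have : w ∈ L ∩ Vs i := ⟨hw.2, hAV hw.1⟩
        rw [hx i] at this; exact this
      exact (hne'.subset_singleton_iff).1 hsub
    have hHCres : restrictH HC L = {L} ∪ {S | ∃ w ∈ L, S = {w}} := by
      apply subset_antisymm
      · rintro S ⟨A, hA, rfl, hSne⟩
        rcases hA with hA | hA
        · rw [mem_singleton_iff.1 hA, hVL]; exact Or.inl rfl
        · obtain ⟨i, hi⟩ := Set.mem_iUnion.1 hA
          exact Or.inr ⟨x i, (hxm i).1, hsingleton i A (hBsub i A hi).1 hSne⟩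
      · rintro S (rfl | ⟨w, hw, rfl⟩)
        · exact ⟨V, hVHC, hVL.symm, hLne⟩
        · obtain ⟨i, hi⟩ := Set.mem_iUnion.1 (hL hw)
          exact ⟨{w}, hmemB i _ (hsing i w hi),
            (Set.inter_eq_left.mpr (singleton_subset_iff.2 hw)).symm, ⟨w, rfl⟩⟩
    have hHab : ∀ a ∈ V, ∀ b ∈ V, a ≠ b →
        restrictH (Hab a b) L = {L} ∪ {S | ∃ w ∈ L, S = {w}} := by
      intro a ha b hb hab
      apply subset_antisymm
      · rintro S ⟨T, hT, rfl, hSne⟩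
        rcases hT with hT | hT
        · rcases hT with rfl | rfl | rfl
          · rw [hVL]; exact Or.inl rfl
          · obtain ⟨w, hwa, hwL⟩ := hSne
            have haL : a ∈ L := (mem_singleton_iff.1 hwa) ▸ hwL
            exact Or.inr ⟨a, haL,
              Set.inter_eq_left.mpr (singleton_subset_iff.2 haL)⟩
          · obtain ⟨w, hwb, hwL⟩ := hSne
            have hbL : b ∈ L := (mem_singleton_iff.1 hwb) ▸ hwL
            exact Or.inr ⟨b, hbL,
              Set.inter_eq_left.mpr (singleton_subset_iff.2 hbL)⟩
        · obtain ⟨i, hi⟩ := Set.mem_iUnion.1 hT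
          obtain ⟨A, hA, rfl, hTne⟩ := hi
          exact Or.inr ⟨x i, (hxm i).1,
            hsingleton i _ (diff_subset.trans (hBsub i A hA).1) hSne⟩
      · rintro S (rfl | ⟨w, hw, rfl⟩)
        · exact ⟨V, Or.inl (Or.inl rfl), hVL.symm, hLne⟩
        · by_cases hwa : w = a
          · subst hwa
            exact ⟨{w}, Or.inl (Or.inr (Or.inl rfl)),
              (Set.inter_eq_left.mpr (singleton_subset_iff.2 hw)).symm, ⟨w, rfl⟩⟩
          · by_cases hwb : w = b
            · subst hwb
              exact ⟨{w}, Or.inl (Or.inr (Or.inr rfl)),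
                (Set.inter_eq_left.mpr (singleton_subset_iff.2 hw)).symm, ⟨w, rfl⟩⟩
            · obtain ⟨i, hi⟩ := Set.mem_iUnion.1 (hL hw)
              have hdiff : ({w} : Set α) \ {a, b} = {w} := by
                ext u
                simp only [mem_diff, mem_singleton_iff, mem_insert_iff]
                constructor
                · rintro ⟨h1, -⟩; exact h1
                · rintro rfl
                  exact ⟨rfl, by rintro (rfl | rfl); exacts [hwa rfl, hwb rfl]⟩
              refine ⟨{w}, Or.inr (Set.mem_iUnion.2 ⟨i, ⟨{w}, hsing i w hi,
                hdiff.symm, ⟨w, rfl⟩⟩⟩),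
                (Set.inter_eq_left.mpr (singleton_subset_iff.2 hw)).symm, ⟨w, rfl⟩⟩
    exact ⟨hkcard, hHCres, hHab⟩
  have key2 : L.ncard = k →
      (∀ a ∈ V, ∀ b ∈ V, a ≠ b → restrictH (Hab a b) L = restrictH HC L) →
      ∀ i, (L ∩ Vs i).ncard = 1 := by
    intro hkL heq
    have pattern : ∀ (j : Fin k) (A : Set α), A ∈ Bs j → ∀ p q,
        p ∈ A ∩ L → q ∈ A ∩ L → p ≠ q → ¬ L ⊆ A → False := by
      intro j A hA p q hp hq hpq hnLA
      have hpV : p ∈ V := hViV j ((hBsub j A hA).1 hp.1)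
      have hqV : q ∈ V := hViV j ((hBsub j A hA).1 hq.1)
      have hmem : A ∩ L ∈ restrictH HC L := ⟨A, hmemB j A hA, rfl, ⟨p, hp⟩⟩
      rw [← heq p hpV q hqV hpq] at hmem
      obtain ⟨T, hT, hTeq, -⟩ := hmem
      rcases hT with hT | hT
      · rcases hT with rfl | rfl | rfl
        · rw [hVL] at hTeq
          exact hnLA (by rw [← hTeq]; exact inter_subset_left)
        · have : q ∈ ({p} : Set α) ∩ L := hTeq ▸ hq
          exact hpq (mem_singleton_iff.1 this.1).symm
        · have : p ∈ ({q} : Set α) ∩ L := hTeq ▸ hp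
          exact hpq (mem_singleton_iff.1 this.1)
      · obtain ⟨i, hi⟩ := Set.mem_iUnion.1 hT
        obtain ⟨A', hA', rfl, -⟩ := hi
        have : p ∈ (A' \ {p, q}) ∩ L := hTeq ▸ hp
        exact this.1.2 (Or.inl rfl)
    have claim0 : ∀ j, ¬ L ⊆ Vs j := by
      intro j hLj
      obtain ⟨A, hA, p, q, hp, hq, hpq, hnLA⟩ :=
        hierarchy_split (hfin j) (hB j).1 (hB j).2 hLj (by omega)
      exact pattern j A hA p q hp hq hpq hnLA
    have claim1 : ∀ j, (L ∩ Vs j).ncard ≤ 1 := by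
      intro j
      by_contra hgt
      obtain ⟨p, q, hp, hq, hpq⟩ := (Set.one_lt_ncard_iff (s := L ∩ Vs j)
        ((hfin j).subset inter_subset_right)).1 (by omega)
      exact pattern j (Vs j) (hVB j) p q ⟨hp.2, hp.1⟩ ⟨hq.2, hq.1⟩ hpq (claim0 j)
    intro i
    have hfinLV : (L ∩ Vs i).Finite := (hfin i).subset inter_subset_right
    by_contra hne1
    have h0 : L ∩ Vs i = ∅ :=
      (Set.ncard_eq_zero hfinLV).1 (by have := claim1 i; omega)
    have hex : ∀ w ∈ L, ∃ j, w ∈ Vs j := fun w hw => Set.mem_iUnion.1 (hL hw)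
    set f : α → Fin k := fun w => if h : ∃ j, w ∈ Vs j then h.choose else i with hf
    have hfspec : ∀ w ∈ L, w ∈ Vs (f w) := by
      intro w hw
      have h := hex w hw
      simp only [hf, dif_pos h]
      exact h.choose_spec
    have hinj : Set.InjOn f L := by
      intro u hu v hv huv
      have h1 : u ∈ L ∩ Vs (f u) := ⟨hu, hfspec u hu⟩
      have h2 : v ∈ L ∩ Vs (f u) := ⟨hv, huv ▸ hfspec v hv⟩
      exact (Set.ncard_le_one ((hfin (f u)).subset inter_subset_right)).1
        (claim1 (f u)) u h1 v h2
    have himg : f '' L ⊆ {j : Fin k | j ≠ i} := by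
      rintro j ⟨w, hw, rfl⟩
      intro hji
      have : w ∈ L ∩ Vs i := ⟨hw, hji ▸ hfspec w hw⟩
      rw [h0] at this
      exact this
    have hcard1 : (f '' L).ncard = k := by rw [Set.ncard_image_of_injOn hinj, hkL]
    have hcard2 : ({j : Fin k | j ≠ i}).ncard = k - 1 := by
      have huniv : {j : Fin k | j ≠ i} = Set.univ \ {i} := by
        ext j; simp [Set.mem_diff]
      rw [huniv, Set.ncard_diff_singleton_of_mem (mem_univ i),
        Set.ncard_univ, Nat.card_eq_fintype_card, Fintype.card_fin]
    have hle' := Set.ncard_le_ncard himg (Set.toFinite _)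
    omega
  refine ⟨⟨fun h => key2 h.1 h.2, fun h => ?_⟩, fun h => ?_⟩
  · obtain ⟨hkc, hres, habres⟩ := key1 h
    exact ⟨hkc, fun a ha b hb hab => (habres a ha b hb hab).trans hres.symm⟩
  · exact (key1 (key2 h.1 h.2)).2.1
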